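/- Fix an integer n ≥ 1, real numbers N ∉ {0, n} and ε, and set c := (1/n)·(1 − ε²·(N−n)/N). Let B, R : ℝ → Matrix (Fin n) (Fin n) ℝ with B differentiable and B′(t) + B(t)·B(t) + R(t) = 0 for all t, and let ψ : ℝ → ℝ be twice differentiable. Define e(t) := exp((2(1−ε)/n)·ψ(t)), θ_ε(t) := e(t)·(trace(B(t)) − ψ′(t)), B_ε(t) := e(t) • (B(t) − (ψ′(t)/n) • 1), σ_ε(t) := B_ε(t) − (θ_ε(t)/n) • 1, θ_ε*(t) := e(t)·θ_ε′(t), ψ*(t) := e(t)·ψ′(t), and Ric_N(t) := e(t)²·(trace(R(t)) + ψ″(t) − ψ′(t)²/(N−n)). Then for all t ∈ ℝ: θ_ε*(t) + c·θ_ε(t)² + (N(N−n)/n)·(ε·θ_ε(t)/N + ψ*(t)/(N−n))² + trace(σ_ε(t)·σ_ε(t)) + Ric_N(t) = 0. -/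

import Mathlib

attribute [local instance] Matrix.normedAddCommGroup Matrix.normedSpace

open Matrix

/-- The timelike weighted Raychaudhuri equation with ε-range (equation (6.3)):
for a differentiable solution `B` of the matrix Riccati equation `B' + B² + R = 0`
and a twice differentiable weight `ψ`, the weighted expansion scalar `θ_ε`, the
weighted shear `σ_ε`, and the weighted Ricci curvature `Ric_N` satisfy
`θ_ε* + c θ_ε² + (N(N−n)/n)(ε θ_ε/N + ψ*/(N−n))² + trace(σ_ε²) + Ric_N = 0`. -/
theorem weighted_raychaudhuri
    (n : ℕ) (hn : 1 ≤ n) (N ε : ℝ) (hN0 : N ≠ 0) (hNn : N ≠ (n : ℝ))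
    (c : ℝ) (hc : c = (1 / n) * (1 - ε ^ 2 * (N - n) / N))
    (B R : ℝ → Matrix (Fin n) (Fin n) ℝ)
    (hB : Differentiable ℝ B)
    (hRiccati : ∀ t : ℝ, deriv B t + B t * B t + R t = 0)
    (ψ : ℝ → ℝ) (hψ : Differentiable ℝ ψ) (hψ' : Differentiable ℝ (deriv ψ))
    (e : ℝ → ℝ) (he : ∀ t, e t = Real.exp ((2 * (1 - ε) / n) * ψ t))
    (θε : ℝ → ℝ) (hθε : ∀ t, θε t = e t * ((B t).trace - deriv ψ t))
    (Bε : ℝ → Matrix (Fin n) (Fin n) ℝ)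
    (hBε : ∀ t, Bε t = e t • (B t - (deriv ψ t / n) • (1 : Matrix (Fin n) (Fin n) ℝ)))
    (σε : ℝ → Matrix (Fin n) (Fin n) ℝ)
    (hσε : ∀ t, σε t = Bε t - (θε t / n) • (1 : Matrix (Fin n) (Fin n) ℝ))
    (θεstar : ℝ → ℝ) (hθεstar : ∀ t, θεstar t = e t * deriv θε t)
    (ψstar : ℝ → ℝ) (hψstar : ∀ t, ψstar t = e t * deriv ψ t)
    (RicN : ℝ → ℝ)
    (hRicN : ∀ t, RicN t =
      (e t) ^ 2 * ((R t).trace + deriv (deriv ψ) t - (deriv ψ t) ^ 2 / (N - n))) :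
    ∀ t : ℝ,
      θεstar t + c * (θε t) ^ 2
        + (N * (N - n) / n) * (ε * θε t / N + ψstar t / (N - n)) ^ 2
        + (σε t * σε t).trace + RicN t = 0 := by
  intro t
  have hn0 : (n : ℝ) ≠ 0 := Nat.cast_ne_zero.mpr (by omega)
  have hNn0 : N - (n : ℝ) ≠ 0 := sub_ne_zero.mpr hNn
  -- derivative of trace B
  have hBd : HasDerivAt B (deriv B t) t := (hB t).hasDerivAt
  have L : Matrix (Fin n) (Fin n) ℝ →L[ℝ] ℝ :=
    LinearMap.toContinuousLinearMap (Matrix.traceLinearMap (Fin n) ℝ ℝ)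
  have htr : HasDerivAt (fun s => (B s).trace) ((deriv B t).trace) t := by
    have := (LinearMap.toContinuousLinearMap
      (Matrix.traceLinearMap (Fin n) ℝ ℝ)).hasFDerivAt.comp_hasDerivAt t hBd
    exact this
  have hp : HasDerivAt ψ (deriv ψ t) t := (hψ t).hasDerivAt
  have hp2 : HasDerivAt (deriv ψ) (deriv (deriv ψ) t) t := (hψ' t).hasDerivAt
  have heF : e = fun s => Real.exp ((2 * (1 - ε) / n) * ψ s) := funext he
  have hE : HasDerivAt e (Real.exp ((2 * (1 - ε) / n) * ψ t) * ((2 * (1 - ε) / n) * deriv ψ t)) t := by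
    rw [heF]; exact ((hp.const_mul (2 * (1 - ε) / n)).exp)
  have hED : HasDerivAt e (e t * ((2 * (1 - ε) / n) * deriv ψ t)) t := by rwa [← he t] at hE
  have hθF : θε = fun s => e s * ((B s).trace - deriv ψ s) := funext hθε
  have hθd : HasDerivAt θε
      (e t * ((2 * (1 - ε) / n) * deriv ψ t) * ((B t).trace - deriv ψ t)
        + e t * ((deriv B t).trace - deriv (deriv ψ) t)) t := by
    rw [hθF]; exact hED.mul (htr.sub hp2)
  have hderivθ := hθd.deriv
  -- Riccati trace
  have hD : deriv B t = -(B t * B t) - R t := by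
    have h := hRiccati t
    have : deriv B t + (B t * B t + R t) = 0 := by rw [← add_assoc]; exact h
    rw [add_eq_zero_iff_eq_neg] at this
    rw [this]; abel
  have htrD : (deriv B t).trace = -(B t * B t).trace - (R t).trace := by
    rw [hD]; simp [Matrix.trace_sub, Matrix.trace_neg]
  -- trace of σε²
  have hσtr : (σε t * σε t).trace
      = (e t)^2 * ((B t * B t).trace - ((B t).trace)^2 / n) := by
    rw [hσε, hBε, hθε]
    simp [Matrix.sub_mul, Matrix.mul_sub, Matrix.smul_mul, Matrix.mul_smul,
      Matrix.trace_sub, Matrix.trace_smul, Matrix.trace_one, smul_smul, smul_eq_mul]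
    field_simp
    ring
  rw [hθεstar, hθε, hψstar, hRicN, hσtr, hderivθ, htrD, hc]
  field_simp [hn0, hN0, hNn0]
  ring
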